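/- If ‖F‖₂ < 1/10, then the Fréchet derivative of Δ₁ at F in direction H satisfies ‖DΔ₁(F)[H]‖₂ ≤ 9‖F‖₂·‖H‖₂, where DΔ₁(F)[H] = DΔ(F)[H] + (DΔ(F)[H])ᵀ + (H − DΔ(F)[H])ᵀ(F − Δ(F)) + (F − Δ(F))ᵀ(H − DΔ(F)[H]). -/

import Mathlib

open Matrix

noncomputable def sn {n : Type*} [Fintype n] [DecidableEq n] (M : Matrix n n ℝ) : ℝ :=
  ‖Matrix.toEuclideanCLM (𝕜 := ℝ) (n := n) M‖

noncomputable def Delta {n : Type*} [Fintype n] [DecidableEq n] (E : Matrix n n ℝ) : Matrix n n ℝ :=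
  (1 + E)⁻¹ - 1 + E

noncomputable def Delta1 {n : Type*} [Fintype n] [DecidableEq n] (E : Matrix n n ℝ) : Matrix n n ℝ :=
  Delta E + (Delta E)ᵀ + (E - Delta E)ᵀ * (E - Delta E)

noncomputable def Delta2 {n : Type*} [Fintype n] [DecidableEq n] (E D : Matrix n n ℝ) : Matrix n n ℝ :=
  -(D * Delta E) - (D * Delta E)ᵀ - (E - Delta E)ᵀ * D * (E - Delta E)

noncomputable def DDelta {n : Type*} [Fintype n] [DecidableEq n] (F H : Matrix n n ℝ) : Matrix n n ℝ :=
  ∑' k : ℕ, ((-1 : ℝ)^(k+2)) • ∑ l ∈ Finset.range (k+2), F^l * H * F^(k+1-l)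

noncomputable def frob {n : Type*} [Fintype n] (M : Matrix n n ℝ) : ℝ :=
  Real.sqrt (∑ i, ∑ j, (M i j)^2)


set_option synthInstance.maxHeartbeats 1000000
set_option maxHeartbeats 2000000
set_option linter.unusedSectionVars false
set_option linter.unusedTactic false

section Aux
variable {n : Type*} [Fintype n] [DecidableEq n]

lemma sn_nonneg (M : Matrix n n ℝ) : 0 ≤ sn M := norm_nonneg _
lemma sn_mul_le (A B : Matrix n n ℝ) : sn (A*B) ≤ sn A * sn B := by
  unfold sn; rw [_root_.map_mul]; exact norm_mul_le _ _
lemma sn_add_le (A B : Matrix n n ℝ) : sn (A+B) ≤ sn A + sn B := by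
  unfold sn; rw [map_add]; exact norm_add_le _ _
lemma sn_sub_le (A B : Matrix n n ℝ) : sn (A-B) ≤ sn A + sn B := by
  unfold sn; rw [map_sub]; exact norm_sub_le _ _
lemma sn_one_le : sn (1 : Matrix n n ℝ) ≤ 1 := by
  unfold sn; rw [_root_.map_one]
  simpa [ContinuousLinearMap.one_def] using ContinuousLinearMap.norm_id_le (E := EuclideanSpace ℝ n)
lemma sn_transpose (A : Matrix n n ℝ) : sn Aᵀ = sn A := by
  have h : Aᵀ = Aᴴ := by ext i j; simp [Matrix.conjTranspose]
  unfold sn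
  rw [h, show (Matrix.toEuclideanCLM (𝕜 := ℝ) (n := n)) Aᴴ
      = star (Matrix.toEuclideanCLM (𝕜 := ℝ) (n := n) A) from map_star _ _,
    ContinuousLinearMap.star_eq_adjoint]
  exact ContinuousLinearMap.adjoint.norm_map _

lemma clm_pow_le (T : EuclideanSpace ℝ n →L[ℝ] EuclideanSpace ℝ n) (k : ℕ) : ‖T^k‖ ≤ ‖T‖^k := by
  cases k with
  | zero => simpa [ContinuousLinearMap.one_def] using ContinuousLinearMap.norm_id_le (E := EuclideanSpace ℝ n)
  | succ m => exact norm_pow_le' T m.succ_pos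

lemma ddelta_bound (F H : Matrix n n ℝ) (hF : sn F < 1/10) :
    sn (DDelta F H) ≤ 3 * sn F * sn H := by
  set φ := Matrix.toEuclideanCLM (𝕜 := ℝ) (n := n) with hφ
  set a := sn F with ha
  set h := sn H with hh
  have ha0 : 0 ≤ a := norm_nonneg _
  have hh0 : 0 ≤ h := norm_nonneg _
  set f : ℕ → Matrix n n ℝ :=
    fun k => ((-1 : ℝ)^(k+2)) • ∑ l ∈ Finset.range (k+2), F^l * H * F^(k+1-l) with hf
  set g : ℕ → (EuclideanSpace ℝ n →L[ℝ] EuclideanSpace ℝ n) := fun k => φ (f k) with hg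
  set g' : ℕ → ℝ := fun k => h * a * ((k+2) * (1/10)^k) with hg'
  -- termwise bound
  have hbound : ∀ k, ‖g k‖ ≤ g' k := by
    intro k
    have h1 : ‖g k‖ ≤ (k+2) * (a^(k+1) * h) := by
      simp only [hg, hf]
      rw [_root_.map_smul]
      rw [norm_smul ((-1:ℝ)^(k+2)) (φ (∑ l ∈ Finset.range (k+2), F^l * H * F^(k+1-l)))]
      have hnn : ‖((-1:ℝ))^(k+2)‖ = 1 := by simp
      rw [hnn, one_mul, map_sum]
      calc ‖∑ l ∈ Finset.range (k+2), φ (F^l * H * F^(k+1-l))‖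
          ≤ ∑ l ∈ Finset.range (k+2), ‖φ (F^l * H * F^(k+1-l))‖ := norm_sum_le _ _
        _ ≤ ∑ l ∈ Finset.range (k+2), a^(k+1) * h := by
            apply Finset.sum_le_sum
            intro l hl
            rw [Finset.mem_range] at hl
            have e1 : φ (F^l * H * F^(k+1-l)) = (φ F)^l * φ H * (φ F)^(k+1-l) := by
              rw [_root_.map_mul, _root_.map_mul, map_pow, map_pow]
            rw [e1]
            calc ‖(φ F)^l * φ H * (φ F)^(k+1-l)‖
                ≤ ‖(φ F)^l * φ H‖ * ‖(φ F)^(k+1-l)‖ := norm_mul_le _ _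
              _ ≤ ‖(φ F)^l‖ * ‖φ H‖ * ‖(φ F)^(k+1-l)‖ := by
                  exact mul_le_mul_of_nonneg_right (norm_mul_le _ _) (norm_nonneg _)
              _ ≤ a^l * h * a^(k+1-l) := by
                  have p1 := clm_pow_le (φ F) l
                  have p2 := clm_pow_le (φ F) (k+1-l)
                  have key : ‖(φ F)^l‖ * ‖φ H‖ * ‖(φ F)^(k+1-l)‖
                      ≤ ‖φ F‖^l * ‖φ H‖ * ‖φ F‖^(k+1-l) :=
                    mul_le_mul (mul_le_mul p1 le_rfl (norm_nonneg _) (by positivity))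
                      p2 (norm_nonneg _) (by positivity)
                  exact key
              _ = a^(k+1) * h := by
                  rw [mul_comm (a^l) h, mul_assoc, ← pow_add]
                  rw [show l + (k+1-l) = k+1 from Nat.add_sub_cancel' (by omega)]
                  ring
        _ = (k+2) * (a^(k+1) * h) := by
            rw [Finset.sum_const, Finset.card_range]
            push_cast; ring
    refine h1.trans ?_
    have hak : a^k ≤ (1/10)^k := pow_le_pow_left₀ ha0 hF.le k
    calc ((k:ℝ)+2) * (a^(k+1) * h) = h * (a * (((k:ℝ)+2) * a^k)) := by ring
      _ ≤ h * (a * (((k:ℝ)+2) * (1/10)^k)) := by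
          have : ((k:ℝ)+2) * a^k ≤ ((k:ℝ)+2) * (1/10)^k := by
            apply mul_le_mul_of_nonneg_left hak; positivity
          apply mul_le_mul_of_nonneg_left _ hh0
          exact mul_le_mul_of_nonneg_left this ha0
      _ = g' k := by simp [hg']; ring
  -- sum of bounds
  have hS : HasSum g' (h * a * (190/81)) := by
    have h10 : ‖(1/10 : ℝ)‖ < 1 := by
      rw [Real.norm_eq_abs, abs_of_nonneg (by norm_num : (0:ℝ) ≤ 1/10)]; norm_num
    have h1 : HasSum (fun k : ℕ => (k:ℝ) * (1/10)^k) ((1/10) / (1 - 1/10)^2) :=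
      hasSum_coe_mul_geometric_of_norm_lt_one h10
    have h2 : HasSum (fun k : ℕ => (2:ℝ) * (1/10)^k) (2 * (1 - (1/10:ℝ))⁻¹) :=
      (hasSum_geometric_of_lt_one (by norm_num) (by norm_num)).mul_left 2
    have h3 : HasSum (fun k : ℕ => ((k:ℝ)+2) * (1/10)^k) (190/81) := by
      have heq : (fun k : ℕ => ((k:ℝ)+2) * (1/10)^k)
          = fun k : ℕ => (k:ℝ)*(1/10)^k + 2*(1/10)^k := by funext k; ring
      rw [heq, show (190:ℝ)/81 = 1/10/(1-1/10)^2 + 2*(1-(1/10:ℝ))⁻¹ by norm_num]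
      exact h1.add h2
    simpa [hg', mul_assoc] using h3.mul_left (h * a)
  have hgsum : Summable g := Summable.of_norm_bounded hS.summable hbound
  -- transfer tsum through φ.symm
  have hψ : ∃ ψ : (EuclideanSpace ℝ n →L[ℝ] EuclideanSpace ℝ n) →L[ℝ] Matrix n n ℝ,
      ∀ T, ψ T = φ.symm T := by
    let L : (EuclideanSpace ℝ n →L[ℝ] EuclideanSpace ℝ n) →ₗ[ℝ] Matrix n n ℝ :=
      { toFun := φ.symm, map_add' := fun x y => map_add _ x y,
        map_smul' := fun c x => map_smul φ.symm c x }
    exact ⟨L.toContinuousLinearMap, fun T => rfl⟩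
  obtain ⟨ψ, hψ⟩ := hψ
  have hDD : DDelta F H = φ.symm (∑' k, g k) := by
    have : DDelta F H = ∑' k, ψ (g k) := by
      unfold DDelta
      congr 1; funext k
      rw [hψ, hg]; simp [hf]
    rw [this, ← ψ.map_tsum hgsum, hψ]
  have : sn (DDelta F H) = ‖∑' k, g k‖ := by
    rw [hDD]; unfold sn; rw [← hφ]
    congr 1
    exact φ.apply_symm_apply _
  rw [this]
  have := tsum_of_norm_bounded hS hbound
  refine this.trans ?_
  nlinarith [mul_nonneg ha0 hh0]

lemma delta_bound (F : Matrix n n ℝ) (hF : sn F < 1/10) :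
    sn (F - Delta F) ≤ (10/9) * sn F := by
  set φ := Matrix.toEuclideanCLM (𝕜 := ℝ) (n := n) with hφ
  have hlt : ‖-(φ F)‖ < 1 := by rw [norm_neg]; calc ‖φ F‖ < 1/10 := hF
                                                  _ < 1 := by norm_num
  set u : Units (EuclideanSpace ℝ n →L[ℝ] EuclideanSpace ℝ n) := Units.oneSub (-(φ F)) hlt with hu
  have hval : (u : EuclideanSpace ℝ n →L[ℝ] EuclideanSpace ℝ n) = φ (1 + F) := by
    simp [hu, Units.oneSub, _root_.map_add, _root_.map_one]
  set B : Matrix n n ℝ := φ.symm ↑u⁻¹ with hB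
  have hφB : φ B = ↑u⁻¹ := by simp [hB]
  have h1 : (1 + F) * B = 1 := by
    have e : φ ((1 + F) * B) = φ 1 := by
      rw [_root_.map_mul, _root_.map_one, hφB, ← hval, Units.mul_inv]
    exact φ.injective e
  have hinv : (1 + F)⁻¹ = B := Matrix.inv_eq_right_inv h1
  have h2 : B * (1 + F) = 1 := by rwa [mul_eq_one_comm] at h1
  have hsum : B + B * F = 1 := by rw [← h2]; noncomm_ring
  have hx : B * F = 1 - B := eq_sub_of_add_eq' hsum
  have hFD : F - Delta F = B * F := by
    unfold Delta; rw [hinv, hx]; abel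
  have hBid : B = 1 - B * F := eq_sub_of_add_eq hsum
  have hBbd : sn B ≤ 1 + sn B * sn F := by
    calc sn B = sn (1 - B * F) := by rw [← hBid]
    _ ≤ sn 1 + sn (B * F) := sn_sub_le _ _
    _ ≤ 1 + sn B * sn F := by
        have := sn_mul_le B F; have := sn_one_le (n := n); linarith
  have hB9 : sn B ≤ 10/9 := by
    have h0 : (0:ℝ) ≤ sn B := norm_nonneg _
    nlinarith [hF, h0]
  calc sn (F - Delta F) = sn (B * F) := by rw [hFD]
  _ ≤ sn B * sn F := sn_mul_le _ _
  _ ≤ (10/9) * sn F := by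
      have h0F : (0:ℝ) ≤ sn F := norm_nonneg _
      exact mul_le_mul_of_nonneg_right hB9 h0F

end Aux

theorem stmt10 {n : Type*} [Fintype n] [DecidableEq n] (F H : Matrix n n ℝ) (hF : sn F < 1/10) :
    sn (DDelta F H + (DDelta F H)ᵀ + (H - DDelta F H)ᵀ * (F - Delta F)
        + (F - Delta F)ᵀ * (H - DDelta F H)) ≤ 9 * sn F * sn H := by
  set D := DDelta F H with hD
  set T := F - Delta F with hT
  have hd : sn D ≤ 3 * sn F * sn H := ddelta_bound F H hF
  have ht : sn T ≤ (10/9) * sn F := delta_bound F hF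
  have hHD : sn (H - D) ≤ sn H + sn D := sn_sub_le _ _
  have step : sn (D + Dᵀ + (H - D)ᵀ * T + Tᵀ * (H - D))
      ≤ sn D + sn D + sn (H - D) * sn T + sn T * sn (H - D) := by
    calc sn (D + Dᵀ + (H - D)ᵀ * T + Tᵀ * (H - D))
        ≤ sn (D + Dᵀ + (H - D)ᵀ * T) + sn (Tᵀ * (H - D)) := sn_add_le _ _
      _ ≤ sn (D + Dᵀ) + sn ((H - D)ᵀ * T) + sn (Tᵀ * (H - D)) := by
          have := sn_add_le (D + Dᵀ) ((H - D)ᵀ * T); linarith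
      _ ≤ (sn D + sn Dᵀ) + sn ((H - D)ᵀ * T) + sn (Tᵀ * (H - D)) := by
          have := sn_add_le D Dᵀ; linarith
      _ ≤ sn D + sn D + sn (H - D) * sn T + sn T * sn (H - D) := by
          have h1 := sn_mul_le (H - D)ᵀ T
          have h2 := sn_mul_le Tᵀ (H - D)
          rw [sn_transpose] at h1 h2 ⊢
          linarith
  refine step.trans ?_
  have h0F : 0 ≤ sn F := sn_nonneg F
  have h0H : 0 ≤ sn H := sn_nonneg H
  have h0D : 0 ≤ sn D := sn_nonneg D
  have h0T : 0 ≤ sn T := sn_nonneg T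
  nlinarith [mul_le_mul hHD ht h0T (by linarith), mul_nonneg h0F h0H,
    mul_le_mul hd (le_refl (sn T)) h0T (by nlinarith),
    mul_nonneg (mul_nonneg h0F h0H) h0F, hF, mul_le_mul_of_nonneg_right hF.le h0H]
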